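/- arXiv:2604.05161 — 10 statements merged into one kernel-verified Lean document; each statement's English description precedes it below -/
import Mathlib

section
/- Every regular SMB algebra satisfies the identity x ∧ y ≈ d(y,y,x) ≈ d(x,y,y). Consequently, in a regular SMB algebra the clone of term operations is generated by the single operation d. -/
/-- A semilattice of Mal'cev blocks (SMB algebra): an idempotent algebra `(A; ∧, d)`
together with a congruence `sim` such that the quotient is a semilattice under `∧`,
and on each `sim`-class `∧` is first projection and `d` is Mal'cev. -/
structure SMB (A : Type) where
  meet : A → A → A
  d : A → A → A → A
  sim : A → A → Prop
  sim_equiv : Equivalence sim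
  sim_meet : ∀ {a b a' b'}, sim a a' → sim b b' → sim (meet a b) (meet a' b')
  sim_d : ∀ {a b c a' b' c'}, sim a a' → sim b b' → sim c c' → sim (d a b c) (d a' b' c')
  meet_idem : ∀ a, meet a a = a
  d_idem : ∀ a, d a a a = a
  meet_comm_sim : ∀ a b, sim (meet a b) (meet b a)
  meet_assoc_sim : ∀ a b c, sim (meet (meet a b) c) (meet a (meet b c))
  meet_proj : ∀ {a b}, sim a b → meet a b = a
  malcev_left : ∀ {a b}, sim a b → d a a b = b
  malcev_right : ∀ {a b}, sim a b → d b a a = b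

/-- A regular SMB algebra. -/
structure RegSMB (A : Type) extends SMB A where
  reg1 : ∀ a b c, sim (d a b c) (meet (meet a b) c)
  reg2 : ∀ a b, sim (meet a b) a → meet a b = a
  reg3 : ∀ x y z, d x y z = d (meet x (meet z y)) (meet y (meet z x)) (meet z (meet y x))
  reg4 : ∀ x y, meet x (meet x y) = meet x y

/-- `M` is the least `sim`-class of the SMB algebra `S`. -/
def SMB.IsMinClass {A : Type} (S : SMB A) (M : Set A) : Prop :=
  ∃ m, M = {x | S.sim x m} ∧ ∀ b, S.sim (S.meet m b) m

/-- A congruence of an SMB algebra. -/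
def SMB.IsCong {A : Type} (S : SMB A) (θ : A → A → Prop) : Prop :=
  Equivalence θ ∧
  (∀ a b a' b', θ a a' → θ b b' → θ (S.meet a b) (S.meet a' b')) ∧
  (∀ a b c a' b' c', θ a a' → θ b b' → θ c c' → θ (S.d a b c) (S.d a' b' c'))

def CongLE {A : Type} (α β : A → A → Prop) : Prop := ∀ a b, α a b → β a b

/-- `α ≺ β`: a covering pair of congruences. -/
def SMB.IsCover {A : Type} (S : SMB A) (α β : A → A → Prop) : Prop :=
  S.IsCong α ∧ S.IsCong β ∧ CongLE α β ∧ ¬ CongLE β α ∧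
  ∀ γ, S.IsCong γ → CongLE α γ → CongLE γ β → (CongLE γ α ∨ CongLE β γ)

/-- The Rees congruence `Δ ∪ M × M` of the least class `M`. -/
def reesCong {A : Type} (M : Set A) : A → A → Prop := fun a b => a = b ∨ (a ∈ M ∧ b ∈ M)

/-- Syntactic unary polynomials over the SMB signature with constants from `K`. -/
inductive PTerm (K : Type) : Type
  | var : PTerm K
  | const : K → PTerm K
  | meet : PTerm K → PTerm K → PTerm K
  | dd : PTerm K → PTerm K → PTerm K → PTerm K

def PTerm.eval {A K : Type} (S : SMB A) (κ : K → A) : PTerm K → A → A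
  | .var => fun x => x
  | .const k => fun _ => κ k
  | .meet p q => fun x => S.meet (p.eval S κ x) (q.eval S κ x)
  | .dd p q r => fun x => S.d (p.eval S κ x) (q.eval S κ x) (r.eval S κ x)

def MapsC {A B : Type} (f : A → B) (θ : A → A → Prop) (θ' : B → B → Prop) : Prop :=
  ∀ a b, θ a b → θ' (f a) (f b)

/-- `R` is a subdirect subuniverse of the product of the `A i`. -/
def SubdirectSMB {n : ℕ} {A : Fin n → Type} (S : ∀ i, SMB (A i)) (R : Set (∀ i, A i)) : Prop :=
  (∀ r ∈ R, ∀ s ∈ R, (fun i => (S i).meet (r i) (s i)) ∈ R) ∧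
  (∀ r ∈ R, ∀ s ∈ R, ∀ u ∈ R, (fun i => (S i).d (r i) (s i) (u i)) ∈ R) ∧
  (∀ i x, ∃ r ∈ R, r i = x)

/-- The `k`-th coordinate polynomial of a unary polynomial of `R` (given by a
syntactic polynomial with constants from `R`). -/
def coordEval {n : ℕ} {A : Fin n → Type} (S : ∀ i, SMB (A i)) (R : Set (∀ i, A i))
    (p : PTerm {r : ∀ i, A i // r ∈ R}) (k : Fin n) : A k → A k :=
  PTerm.eval (S k) (fun r => r.1 k) p

/-- `(i, α, β)` can be separated from `(j, γ, δ)` with respect to `R`. -/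
def SepWrt {n : ℕ} {A : Fin n → Type} (S : ∀ i, SMB (A i)) (R : Set (∀ i, A i))
    (i : Fin n) (α β : A i → A i → Prop) (j : Fin n) (γ δ : A j → A j → Prop) : Prop :=
  ∃ p : PTerm {r : ∀ i, A i // r ∈ R},
    ¬ MapsC (coordEval S R p i) β α ∧ MapsC (coordEval S R p j) δ γ

/-- `a` is an `αβ`-split element. -/
def SMB.IsSplit {A : Type} (S : SMB A) (α β : A → A → Prop) (a : A) : Prop :=
  ∃ b c, β b c ∧ ¬ α (S.meet a b) (S.meet a c)

/-- Unary polynomials of a single SMB algebra. -/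
def SMB.Pol1 {A : Type} (S : SMB A) (f : A → A) : Prop :=
  ∃ p : PTerm A, f = PTerm.eval S id p

/-- `(α,β)`-minimal sets of an SMB algebra. -/
def SMB.IsMinSet {A : Type} (S : SMB A) (α β : A → A → Prop) (U : Set A) : Prop :=
  ∃ f, S.Pol1 f ∧ Set.range f = U ∧ ¬ MapsC f β α ∧
    ∀ g, S.Pol1 g → ¬ MapsC g β α → Set.range g ⊆ U → Set.range g = U

/-- Terms over the SMB signature `{∧, d}` in `n` variables. -/
inductive STerm (n : ℕ) : Type
  | var : Fin n → STerm n
  | meet : STerm n → STerm n → STerm n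
  | dd : STerm n → STerm n → STerm n → STerm n

def STerm.eval {A : Type} {n : ℕ} (S : SMB A) : STerm n → (Fin n → A) → A
  | .var i => fun v => v i
  | .meet p q => fun v => S.meet (p.eval S v) (q.eval S v)
  | .dd p q r => fun v => S.d (p.eval S v) (q.eval S v) (r.eval S v)

/-- A term uses only the operation `d`. -/
def STerm.onlyD {n : ℕ} : STerm n → Prop
  | .var _ => True
  | .meet _ _ => False
  | .dd p q r => p.onlyD ∧ q.onlyD ∧ r.onlyD

/-- every regular SMB algebra satisfies `x ∧ y = d(y,y,x) = d(x,y,y)`;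
consequently, the clone of term operations is generated by `d` alone. -/
theorem regSMB_meet_eq_d {A : Type} (S : RegSMB A) :
    (∀ x y : A, S.meet x y = S.d y y x ∧ S.meet x y = S.d x y y) ∧
    (∀ (n : ℕ) (t : STerm n), ∃ t' : STerm n, t'.onlyD ∧
      ∀ v : Fin n → A, t.eval S.toSMB v = t'.eval S.toSMB v) := by
  have key : ∀ x y : A, S.meet x y = S.d y y x ∧ S.meet x y = S.d x y y := by
    intro x y
    constructor
    · have h3 := S.reg3 y y x
      rw [S.meet_idem y] at h3
      have hsim : S.sim (S.meet y (S.meet x y)) (S.meet x y) := by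
        have h1 := S.meet_comm_sim y (S.meet x y)
        have h2 := S.meet_assoc_sim x y y
        rw [S.meet_idem y] at h2
        exact S.sim_equiv.trans h1 h2
      rw [h3, S.malcev_left hsim]
    · have h3 := S.reg3 x y y
      rw [S.meet_idem y, S.reg4 y x] at h3
      rw [h3, S.malcev_right (S.sim_equiv.symm (S.meet_comm_sim x y))]
  refine ⟨key, fun n t => ?_⟩
  induction t with
  | var i => exact ⟨.var i, trivial, fun v => rfl⟩
  | meet p q ihp ihq =>
    obtain ⟨p', hp', hpe⟩ := ihp
    obtain ⟨q', hq', hqe⟩ := ihq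
    exact ⟨.dd p' q' q', ⟨hp', hq', hq'⟩, fun v => by
      simp only [STerm.eval, ← hpe, ← hqe, ← (key _ _).2]⟩
  | dd p q r ihp ihq ihr =>
    obtain ⟨p', hp', hpe⟩ := ihp
    obtain ⟨q', hq', hqe⟩ := ihq
    obtain ⟨r', hr', hre⟩ := ihr
    exact ⟨.dd p' q' r', ⟨hp', hq', hr'⟩, fun v => by
      simp only [STerm.eval, hpe, hqe, hre]⟩
end

section
/- Let R be a subdirect product of finite regular SMB algebras A₁, ..., Aₙ, where min(Aᵢ) denotes the least ∼-class of Aᵢ. Then the intersection (min(A₁) × ... × min(Aₙ)) ∩ R is nonempty, and it equals min(R), the least ∼-class of R viewed as an SMB algebra. -/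
/-- in a subdirect product `R` of finite regular SMB algebras, the set
`(min A₁ × ⋯ × min Aₙ) ∩ R` is nonempty and equals the least `∼`-class `min R` of `R`. -/
theorem min_of_subdirect_product {n : ℕ} (hn : 0 < n) {A : Fin n → Type}
    [∀ i, Fintype (A i)] (S : ∀ i, RegSMB (A i))
    (M : ∀ i, Set (A i)) (hM : ∀ i, SMB.IsMinClass (S i).toSMB (M i))
    (R : Set (∀ i, A i)) (hR : SubdirectSMB (fun i => (S i).toSMB) R) :
    ∃ a ∈ R, (∀ i, a i ∈ M i) ∧
      ({x | x ∈ R ∧ ∀ i, x i ∈ M i} = {x | x ∈ R ∧ ∀ i, (S i).sim (x i) (a i)}) ∧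
      (∀ b ∈ R, ∀ i, (S i).sim ((S i).meet (a i) (b i)) (a i)) := by
  classical
  set m : ∀ i, A i := fun i => (hM i).choose with hm
  have hMeq : ∀ i, M i = {x | (S i).sim x (m i)} := fun i => (hM i).choose_spec.1
  have hmin : ∀ i b, (S i).sim ((S i).meet (m i) b) (m i) := fun i => (hM i).choose_spec.2
  have hlow : ∀ i x b, (S i).sim x (m i) → (S i).sim ((S i).meet x b) (m i) := by
    intro i x b hx
    have h1 : (S i).sim ((S i).meet x b) ((S i).meet (m i) b) :=
      (S i).sim_meet hx ((S i).sim_equiv.refl b)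
    exact (S i).sim_equiv.trans h1 (hmin i b)
  have hlow' : ∀ i x b, (S i).sim x (m i) → (S i).sim ((S i).meet b x) (m i) := by
    intro i x b hx
    have h1 := (S i).meet_comm_sim b x
    exact (S i).sim_equiv.trans h1 (hlow i x b hx)
  have key : ∀ k : ℕ, k ≤ n →
      ∃ a ∈ R, ∀ i : Fin n, (i : ℕ) < k → (S i).sim (a i) (m i) := by
    intro k
    induction k with
    | zero =>
        intro _
        obtain ⟨r, hr, _⟩ := hR.2.2 ⟨0, hn⟩ (m ⟨0, hn⟩)
        exact ⟨r, hr, fun i h => absurd h (Nat.not_lt_zero _)⟩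
    | succ k ih =>
        intro hk
        obtain ⟨a, haR, ha⟩ := ih (Nat.le_of_succ_le hk)
        obtain ⟨s, hsR, hs⟩ := hR.2.2 ⟨k, hk⟩ (m ⟨k, hk⟩)
        refine ⟨fun i => (S i).meet (a i) (s i), hR.1 a haR s hsR, ?_⟩
        intro i hi
        rcases Nat.lt_succ_iff_lt_or_eq.mp hi with h | h
        · exact hlow i (a i) (s i) (ha i h)
        · have hieq : i = ⟨k, hk⟩ := Fin.ext h
          subst hieq
          have hsim : (S (⟨k, hk⟩ : Fin n)).sim (s ⟨k, hk⟩) (m ⟨k, hk⟩) := by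
            rw [hs]; exact (S (⟨k, hk⟩ : Fin n)).sim_equiv.refl _
          exact hlow' _ (s _) (a _) hsim
  obtain ⟨a, haR, ha'⟩ := key n le_rfl
  have ha : ∀ i, (S i).sim (a i) (m i) := fun i => ha' i i.isLt
  refine ⟨a, haR, ?_, ?_, ?_⟩
  · intro i; rw [hMeq i]; exact ha i
  · ext x
    simp only [Set.mem_setOf_eq]
    constructor
    · rintro ⟨hx, hxM⟩
      refine ⟨hx, fun i => ?_⟩
      have hxm : (S i).sim (x i) (m i) := by have := hxM i; rwa [hMeq i] at this
      exact (S i).sim_equiv.trans hxm ((S i).sim_equiv.symm (ha i))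
    · rintro ⟨hx, hxs⟩
      refine ⟨hx, fun i => ?_⟩
      rw [hMeq i]
      exact (S i).sim_equiv.trans (hxs i) (ha i)
  · intro b _ i
    have h1 : (S i).sim ((S i).meet (a i) (b i)) (m i) := hlow i (a i) (b i) (ha i)
    exact (S i).sim_equiv.trans h1 ((S i).sim_equiv.symm (ha i))
end

section
/- Let R be a subdirect product of two unital SMB algebras A and B with unit elements 1_A and 1_B respectively. Viewing R as a bipartite graph between A and B, the vertices 1_A and 1_B are connected by a path of length at most 3 in R. Specifically, either (1_A, 1_B) ∈ R, or there exist a ∈ A, b ∈ B with (1_A, b), (a, 1_B), (a, b) ∈ R. -/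
/-- in a subdirect product `R ≤sd A × B` of unital SMB algebras, the
units `1_A` and `1_B` are connected by a path of length at most 3 in the bipartite
graph `R`: either `(1_A, 1_B) ∈ R`, or there are `a, b` with
`(1_A, b), (a, 1_B), (a, b) ∈ R`. -/
theorem units_connected {A B : Type} (SA : SMB A) (SB : SMB B)
    (oneA : A) (hA : ∀ x, SA.meet oneA x = x ∧ SA.meet x oneA = x)
    (oneB : B) (hB : ∀ x, SB.meet oneB x = x ∧ SB.meet x oneB = x)
    (R : Set (A × B))
    (hmeet : ∀ r ∈ R, ∀ s ∈ R, (SA.meet r.1 s.1, SB.meet r.2 s.2) ∈ R)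
    (hd : ∀ r ∈ R, ∀ s ∈ R, ∀ u ∈ R, (SA.d r.1 s.1 u.1, SB.d r.2 s.2 u.2) ∈ R)
    (hsub1 : ∀ a : A, ∃ b : B, (a, b) ∈ R)
    (hsub2 : ∀ b : B, ∃ a : A, (a, b) ∈ R) :
    (oneA, oneB) ∈ R ∨
      ∃ (a : A) (b : B), (oneA, b) ∈ R ∧ (a, oneB) ∈ R ∧ (a, b) ∈ R := by
  obtain ⟨b, hb⟩ := hsub1 oneA
  obtain ⟨a, ha⟩ := hsub2 oneB
  right
  refine ⟨a, b, hb, ha, ?_⟩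
  have := hmeet _ hb _ ha
  simpa [(hA a).1, (hB b).2] using this
end

section
/- Let P = (V, D, C) be a multisorted CSP instance over a template T, and let t be a binary term satisfying t(x, t(x,y)) = t(x,y) in all algebras of T. If P has a solution f, then the decomposition instance t(P) has a solution, namely g((i,a)) := t(a, f(i)). -/
/-- Terms over a signature `σ` (σ k = symbols of arity k) in `n` variables. -/
inductive Term (σ : ℕ → Type) (n : ℕ) : Type
  | var : Fin n → Term σ n
  | app : {k : ℕ} → σ k → (Fin k → Term σ n) → Term σ n

/-- An algebra over the signature `σ`. -/
structure Alg (σ : ℕ → Type) where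
  carrier : Type
  interp : {k : ℕ} → σ k → (Fin k → carrier) → carrier

def Term.eval {σ : ℕ → Type} {n : ℕ} (A : Alg σ) : Term σ n → (Fin n → A.carrier) → A.carrier
  | .var i, v => v i
  | .app f ts, v => A.interp f (fun j => (ts j).eval A v)

/-- Unary polynomial operations of `A`. -/
def IsPol1 {σ : ℕ → Type} (A : Alg σ) (p : A.carrier → A.carrier) : Prop :=
  ∃ (k : ℕ) (t : Term σ (k + 1)) (c : Fin k → A.carrier),
    ∀ x, p x = t.eval A (Fin.cons x c)

/-- `n`-ary polynomial operations of `A`. -/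
def IsPolN {σ : ℕ → Type} (A : Alg σ) (n : ℕ) (p : (Fin n → A.carrier) → A.carrier) : Prop :=
  ∃ (k : ℕ) (t : Term σ (n + k)) (c : Fin k → A.carrier),
    ∀ v, p v = t.eval A (Fin.append v c)

/-- A weak near-unanimity term. -/
def IsWNU {σ : ℕ → Type} (A : Alg σ) {n : ℕ} (w : Term σ (n + 1)) : Prop :=
  (∀ x, w.eval A (fun _ => x) = x) ∧
  ∀ x y (j j' : Fin (n + 1)),
    w.eval A (Function.update (fun _ => x) j y) = w.eval A (Function.update (fun _ => x) j' y)

/-- A special wnu term: additionally `x ∘ (x ∘ y) = x ∘ y` where `x ∘ y := w(x,…,x,y)`. -/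
def IsSpecialWNU {σ : ℕ → Type} (A : Alg σ) {n : ℕ} (w : Term σ (n + 1)) : Prop :=
  IsWNU A w ∧
  ∀ x y,
    w.eval A (Function.update (fun _ => x) (Fin.last n)
      (w.eval A (Function.update (fun _ => x) (Fin.last n) y))) =
      w.eval A (Function.update (fun _ => x) (Fin.last n) y)

def IsIdemAlg {σ : ℕ → Type} (A : Alg σ) : Prop :=
  ∀ (k : ℕ) (f : σ k) (x : A.carrier), A.interp f (fun _ => x) = x

/-- Congruences of `A`. -/
def IsCongA {σ : ℕ → Type} (A : Alg σ) (θ : A.carrier → A.carrier → Prop) : Prop :=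
  Equivalence θ ∧
  ∀ (k : ℕ) (f : σ k) (u v : Fin k → A.carrier),
    (∀ j, θ (u j) (v j)) → θ (A.interp f u) (A.interp f v)

def CongLE' {A : Type} (α β : A → A → Prop) : Prop := ∀ a b, α a b → β a b

/-- `α ≺ β`: a covering pair of congruences of `A`. -/
def IsCoverA {σ : ℕ → Type} (A : Alg σ) (α β : A.carrier → A.carrier → Prop) : Prop :=
  IsCongA A α ∧ IsCongA A β ∧ CongLE' α β ∧ ¬ CongLE' β α ∧
  ∀ γ, IsCongA A γ → CongLE' α γ → CongLE' γ β → (CongLE' γ α ∨ CongLE' β γ)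

/-- `(α,β)` can be separated from `(γ,δ)` (within one algebra). -/
def CanSep {σ : ℕ → Type} (A : Alg σ) (α β γ δ : A.carrier → A.carrier → Prop) : Prop :=
  ∃ f, IsPol1 A f ∧ ¬ MapsC f β α ∧ MapsC f δ γ

/-- `(α,β)`-minimal sets. -/
def IsMinSetA {σ : ℕ → Type} (A : Alg σ) (α β : A.carrier → A.carrier → Prop)
    (U : Set A.carrier) : Prop :=
  ∃ f, IsPol1 A f ∧ Set.range f = U ∧ ¬ MapsC f β α ∧
    ∀ g, IsPol1 A g → ¬ MapsC g β α → Set.range g ⊆ U → Set.range g = U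

/-- The retract algebra `p(A)` of `A` by the retraction `p`. -/
def retractAlg {σ : ℕ → Type} (A : Alg σ) (p : A.carrier → A.carrier)
    (hp : ∀ x, p (p x) = p x) : Alg σ where
  carrier := {a : A.carrier // p a = a}
  interp := fun f v => ⟨p (A.interp f (fun i => (v i).1)), hp _⟩

/-- Multisorted CSP constraints. -/
structure Constraint (V : Type) (A : V → Type) where
  scope : Set V
  rel : Set ((i : scope) → A i.1)

/-- `f` is a solution of the instance with constraint set `C`. -/
def IsSol {V : Type} {A : V → Type} (C : Set (Constraint V A)) (f : ∀ i, A i) : Prop :=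
  ∀ c ∈ C, (fun i : c.scope => f i.1) ∈ c.rel

/-- Evaluation of the binary term `t`: `tEv A t i a x = t(a, x)` in the algebra `A i`. -/
def tEv {σ : ℕ → Type} {V : Type} (A : V → Alg σ) (t : Term σ 2) (i : V)
    (a x : (A i).carrier) : (A i).carrier :=
  t.eval (A i) ![a, x]

/-- Membership in the subalgebra `Tᵢ` of `∏_{a ∈ Aᵢ} t_a(Aᵢ)` generated by the
tuples `⟨t(a,b) : a ∈ Aᵢ⟩`, `b ∈ Aᵢ` (tuples viewed as maps `Aᵢ → Aᵢ`; the operations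
of the retract factor `t_a(Aᵢ)` are `x̄ ↦ t(a, f(x̄))`). -/
inductive TClos {σ : ℕ → Type} {V : Type} (A : V → Alg σ) (t : Term σ 2) (i : V) :
    ((A i).carrier → (A i).carrier) → Prop
  | gen (b : (A i).carrier) : TClos A t i (fun a => tEv A t i a b)
  | app {k : ℕ} (f : σ k) (args : Fin k → ((A i).carrier → (A i).carrier))
      (h : ∀ j, TClos A t i (args j)) :
      TClos A t i (fun a => tEv A t i a ((A i).interp f (fun j => args j a)))

/-- if `P` has a solution `f`, then the decomposition `t(P)` has a
solution, namely `g (i, a) := t(a, f i)`: each value lies in the domain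
`A_{i,a} = t_a(Aᵢ)`, the restriction of `g` to each scope `S_r` lies in `R_r`,
and the restriction of `g` to each scope `Sᵢ` lies in `Tᵢ`. -/
theorem decomposition_has_solution {σ : ℕ → Type} {V : Type} (A : V → Alg σ)
    (t : Term σ 2)
    (hid : ∀ (i : V) (x y : (A i).carrier), tEv A t i x (tEv A t i x y) = tEv A t i x y)
    (C : Set (Constraint V (fun i => (A i).carrier)))
    (f : ∀ i, (A i).carrier) (hf : IsSol C f) :
    ∃ g : ∀ (i : V), (A i).carrier → (A i).carrier,
      (∀ i a, g i a = tEv A t i a (f i)) ∧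
      (∀ i a, g i a ∈ Set.range (tEv A t i a)) ∧
      (∀ c ∈ C, ∀ r ∈ c.rel, ∃ x ∈ c.rel,
        ∀ i : c.scope, g i.1 (r i) = tEv A t i.1 (r i) (x i)) ∧
      (∀ i, TClos A t i (g i)) := by
  refine ⟨fun i a => tEv A t i a (f i), fun i a => rfl, fun i a => ⟨f i, rfl⟩,
    fun c hc r hr => ⟨fun i => f i.1, hf c hc, fun i => rfl⟩, fun i => TClos.gen (f i)⟩
end

section
/- Let P = (V, D, C) be a (1,1)-minimal multisorted CSP instance with connected scope graph Γ_V. Then P has a link partition if and only if the microstructure graph Γ_P is disconnected. -/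
/-- Adjacency in the scope (hyper)graph `Γ_V`. -/
def scopeAdj {V : Type} {A : V → Type} (C : Set (Constraint V A)) (i j : V) : Prop :=
  ∃ c ∈ C, i ∈ c.scope ∧ j ∈ c.scope

/-- Adjacency in the microstructure (hyper)graph `Γ_P`. -/
def microAdj {V : Type} {A : V → Type} (C : Set (Constraint V A))
    (u v : Σ i, A i) : Prop :=
  ∃ c ∈ C, ∃ r ∈ c.rel,
    (∃ hu : u.1 ∈ c.scope, r ⟨u.1, hu⟩ = u.2) ∧ (∃ hv : v.1 ∈ c.scope, r ⟨v.1, hv⟩ = v.2)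

/-- A link partition: equivalence relations (encoded by surjective colourings
`part i : A i → Fin k`) with the same number `k ≥ 2` of classes on every domain,
such that every constraint relation decomposes along the classes. -/
def LinkPartition {V : Type} {A : V → Type} (C : Set (Constraint V A)) : Prop :=
  ∃ k : ℕ, 2 ≤ k ∧ ∃ part : ∀ i, A i → Fin k,
    (∀ (i : V) (j : Fin k), ∃ a, part i a = j) ∧
    (∀ c ∈ C, ∀ r ∈ c.rel, ∀ u v : c.scope, part u.1 (r u) = part v.1 (r v))

/-- a (1,1)-minimal instance with connected scope graph has a link
partition iff its microstructure graph is disconnected. -/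
theorem link_partition_iff_micro_disconnected {V : Type} {A : V → Type}
    [Nonempty V] [∀ i, Nonempty (A i)] [∀ i, Fintype (A i)]
    (C : Set (Constraint V A))
    (hvar : ∀ i : V, ∃ c ∈ C, i ∈ c.scope)
    (hmin : ∀ c ∈ C, ∀ (u : c.scope) (a : A u.1), ∃ r ∈ c.rel, r u = a)
    (hscope : ∀ i j : V, Relation.ReflTransGen (scopeAdj C) i j) :
    LinkPartition C ↔ ¬ (∀ u v : Σ i, A i, Relation.ReflTransGen (microAdj C) u v) :=  by
  classical
  constructor
  · rintro ⟨k, hk, part, hsurj, hdec⟩ hconn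
    have step : ∀ u v, microAdj C u v → part u.1 u.2 = part v.1 v.2 := by
      rintro u v ⟨c, hc, r, hr, ⟨hu, hru⟩, ⟨hv, hrv⟩⟩
      rw [← hru, ← hrv]
      exact hdec c hc r hr ⟨u.1, hu⟩ ⟨v.1, hv⟩
    have inv : ∀ u v, Relation.ReflTransGen (microAdj C) u v →
        part u.1 u.2 = part v.1 v.2 := by
      intro u v h
      induction h with
      | refl => rfl
      | tail _ h ih => exact ih.trans (step _ _ h)
    obtain ⟨i⟩ := ‹Nonempty V›
    obtain ⟨a, ha⟩ := hsurj i ⟨0, by omega⟩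
    obtain ⟨b, hb⟩ := hsurj i ⟨1, by omega⟩
    have h2 := inv ⟨i, a⟩ ⟨i, b⟩ (hconn _ _)
    simp only at h2
    rw [ha, hb] at h2
    exact absurd h2 (by simp [Fin.ext_iff])
  · intro hd
    set R := Relation.ReflTransGen (microAdj C) with hRdef
    have Rsymm : ∀ u v, R u v → R v u := by
      intro u v h
      induction h with
      | refl => exact .refl
      | tail _ h ih =>
        refine Relation.ReflTransGen.trans ?_ ih
        obtain ⟨c, hc, r, hr, h1, h2⟩ := h
        exact Relation.ReflTransGen.single ⟨c, hc, r, hr, h2, h1⟩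
    have reach : ∀ (i j : V) (a : A i), ∃ b : A j, R ⟨i, a⟩ ⟨j, b⟩ := by
      intro i j
      induction hscope i j with
      | refl => exact fun a => ⟨a, .refl⟩
      | @tail m j' _ h ih =>
        intro a
        obtain ⟨b, hb⟩ := ih a
        obtain ⟨c, hc, hi', hj⟩ := h
        obtain ⟨r, hr, hru⟩ := hmin c hc ⟨m, hi'⟩ b
        exact ⟨r ⟨j', hj⟩, hb.tail ⟨c, hc, r, hr, ⟨hi', hru⟩, ⟨hj, rfl⟩⟩⟩
    obtain ⟨i0⟩ := ‹Nonempty V›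
    let s : Setoid (A i0) :=
      ⟨fun a b => R ⟨i0, a⟩ ⟨i0, b⟩,
        ⟨fun a => .refl, fun h => Rsymm _ _ h, fun h h' => h.trans h'⟩⟩
    letI : DecidableRel ((· ≈ ·) : A i0 → A i0 → Prop) := fun _ _ => Classical.dec _
    letI : Fintype (Quotient s) := Quotient.fintype s
    set k := Fintype.card (Quotient s) with hkdef
    let e : Quotient s ≃ Fin k := Fintype.equivFin (Quotient s)
    let part : ∀ i, A i → Fin k :=
      fun i a => e (Quotient.mk s (Classical.choose (reach i i0 a)))
    have hchoose : ∀ (i : V) (a : A i),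
        R ⟨i, a⟩ ⟨i0, Classical.choose (reach i i0 a)⟩ :=
      fun i a => Classical.choose_spec (reach i i0 a)
    have partEq : ∀ (i j : V) (a : A i) (b : A j),
        R ⟨i, a⟩ ⟨j, b⟩ → part i a = part j b := by
      intro i j a b h
      have h1 := hchoose i a
      have h2 := hchoose j b
      have : R ⟨i0, Classical.choose (reach i i0 a)⟩
          ⟨i0, Classical.choose (reach j i0 b)⟩ :=
        ((Rsymm _ _ h1).trans h).trans h2
      exact congrArg e (Quotient.sound this)
    refine ⟨k, ?_, part, ?_, ?_⟩
    · push_neg at hd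
      obtain ⟨u, v, huv⟩ := hd
      obtain ⟨bu, hbu⟩ : ∃ b : A i0, R u ⟨i0, b⟩ := reach u.1 i0 u.2
      obtain ⟨bv, hbv⟩ : ∃ b : A i0, R v ⟨i0, b⟩ := reach v.1 i0 v.2
      have hne : (Quotient.mk s bu) ≠ (Quotient.mk s bv) := by
        intro hq
        have : R ⟨i0, bu⟩ ⟨i0, bv⟩ := Quotient.exact hq
        exact huv ((hbu.trans this).trans (Rsymm _ _ hbv))
      have : 1 < k := Fintype.one_lt_card_iff.mpr ⟨_, _, hne⟩
      omega
    · intro i j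
      obtain ⟨b, hb⟩ := Quotient.exists_rep (e.symm j)
      obtain ⟨a, ha⟩ := reach i0 i b
      refine ⟨a, ?_⟩
      have hc : R ⟨i0, b⟩ ⟨i0, Classical.choose (reach i i0 a)⟩ :=
        ha.trans (hchoose i a)
      show e (Quotient.mk s (Classical.choose (reach i i0 a))) = j
      rw [← Quotient.sound hc, hb]
      exact e.apply_symm_apply j
    · intro c hc r hr u v
      exact partEq u.1 v.1 (r u) (r v)
        (Relation.ReflTransGen.single ⟨c, hc, r, hr, ⟨u.2, rfl⟩, ⟨v.2, rfl⟩⟩)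
end

section
/- Let α ≺ β and γ ≺ δ be two covering pairs in the congruence lattice of a finite algebra A such that neither (α,β) can be separated from (γ,δ) nor (γ,δ) from (α,β). Then for any subset U ⊆ A: U is an (α,β)-minimal set if and only if U is a (γ,δ)-minimal set. -/
/-- if neither of two covering pairs can be separated from the other,
they have the same minimal sets. -/
theorem minimal_sets_coincide {σ : ℕ → Type} (A : Alg σ) [Fintype A.carrier]
    (α β γ δ : A.carrier → A.carrier → Prop)
    (hαβ : IsCoverA A α β) (hγδ : IsCoverA A γ δ)
    (hsep1 : ¬ CanSep A α β γ δ) (hsep2 : ¬ CanSep A γ δ α β) :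
    ∀ U : Set A.carrier, IsMinSetA A α β U ↔ IsMinSetA A γ δ U := by
  have key : ∀ f, IsPol1 A f → (¬ MapsC f β α ↔ ¬ MapsC f δ γ) := by
    intro f hf
    constructor
    · intro h1 h2
      exact hsep1 ⟨f, hf, h1, h2⟩
    · intro h1 h2
      exact hsep2 ⟨f, hf, h1, h2⟩
  intro U
  constructor
  · rintro ⟨f, hf, hr, hβα, hmin⟩
    exact ⟨f, hf, hr, (key f hf).mp hβα,
      fun g hg hgδ hgU => hmin g hg ((key g hg).mpr hgδ) hgU⟩
  · rintro ⟨f, hf, hr, hδγ, hmin⟩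
    exact ⟨f, hf, hr, (key f hf).mpr hδγ,
      fun g hg hgβ hgU => hmin g hg ((key g hg).mp hgβ) hgU⟩
end

section
/- Let R be a subdirect product of algebras A₁, ..., Aₙ, and let α ≺ β and γ ≺ δ both be covering pairs in Con(Aᵢ) for the same index i. Then (α,β) can be separated from (γ,δ) within Aᵢ (i.e., there is f ∈ Pol₁(Aᵢ) with f(β) ⊄ α and f(δ) ⊆ γ) if and only if (α,β) can be separated from (γ,δ) with respect to R (i.e., there is g ∈ Pol₁(R) with gᵢ(β) ⊄ α and gᵢ(δ) ⊆ γ, where gᵢ denotes the i-th coordinate polynomial of g). -/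
/-- for covering pairs on the same factor `Aᵢ` of a subdirect product `R`,
separation within `Aᵢ` is equivalent to separation with respect to `R`. -/
theorem separation_iff_separation_wrt_subdirect {σ : ℕ → Type} {n : ℕ}
    (A : Fin n → Alg σ) (R : Set (∀ i, (A i).carrier))
    (hclosed : ∀ (k : ℕ) (f : σ k) (v : Fin k → ∀ i, (A i).carrier),
      (∀ j, v j ∈ R) → (fun i => (A i).interp f (fun j => v j i)) ∈ R)
    (hsubdir : ∀ (i : Fin n) (x : (A i).carrier), ∃ r ∈ R, r i = x)
    (i : Fin n) (α β γ δ : (A i).carrier → (A i).carrier → Prop)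
    (hαβ : IsCoverA (A i) α β) (hγδ : IsCoverA (A i) γ δ) :
    (∃ f, IsPol1 (A i) f ∧ ¬ MapsC f β α ∧ MapsC f δ γ) ↔
    (∃ (k : ℕ) (t : Term σ (k + 1)) (c : Fin k → ∀ l, (A l).carrier),
      (∀ j, c j ∈ R) ∧
      ¬ MapsC (fun x => t.eval (A i) (Fin.cons x (fun j => c j i))) β α ∧
      MapsC (fun x => t.eval (A i) (Fin.cons x (fun j => c j i))) δ γ) := by
  constructor
  · rintro ⟨f, ⟨k, t, c, hft⟩, hnm, hm⟩
    choose r hrR hri using fun j => hsubdir i (c j)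
    refine ⟨k, t, r, hrR, ?_, ?_⟩
    · have : (fun x => t.eval (A i) (Fin.cons x (fun j => r j i))) = f := by
        funext x; rw [hft]; congr 1; funext j
        refine Fin.cases rfl (fun j => ?_) j
        simp [hri]
      rw [this]; exact hnm
    · intro a b hab
      have : (fun x => t.eval (A i) (Fin.cons x (fun j => r j i))) = f := by
        funext x; rw [hft]; congr 1; funext j
        refine Fin.cases rfl (fun j => ?_) j
        simp [hri]
      rw [this]; exact hm a b hab
  · rintro ⟨k, t, c, hcR, hnm, hm⟩
    exact ⟨_, ⟨k, t, fun j => c j i, fun _ => rfl⟩, hnm, hm⟩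
end

section
/- Let A be a finite algebra with a Mal'cev term d, and let α ≺ β in Con(A). Fix (a,b) ∈ β \ α, fix f ∈ Pol₁(A) with f(A) an (α,β)-minimal set and (f(a), f(b)) ∈ β \ α, and define β' := { (p(a₁,...,aₙ), p(b₁,...,bₙ)) : n ∈ ℕ, p ∈ Polₙ(A), and for each i either (aᵢ,bᵢ) ∈ α or (aᵢ,bᵢ) = (f(a),f(b)) }. Then β' is a congruence of A, and hence β' = β. -/
/-- The relation `β'` generated by `α` together with the single pair `(fa, fb)`,
via polynomial operations. -/
def betaPrime {σ : ℕ → Type} (A : Alg σ) (α : A.carrier → A.carrier → Prop)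
    (fa fb : A.carrier) : A.carrier → A.carrier → Prop := fun x y =>
  ∃ (m : ℕ) (p : (Fin m → A.carrier) → A.carrier), IsPolN A m p ∧
    ∃ u v : Fin m → A.carrier,
      (∀ i, α (u i) (v i) ∨ (u i = fa ∧ v i = fb)) ∧ p u = x ∧ p v = y


/-! ### Auxiliary machinery for polynomial operations -/

namespace PolAux

open Term

/-- Substitution of terms into terms. -/
def Term.subst {σ : ℕ → Type} {n m : ℕ} : Term σ n → (Fin n → Term σ m) → Term σ m
  | .var i, g => g i
  | .app f ts, g => .app f (fun j => Term.subst (ts j) g)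

theorem Term.eval_subst {σ : ℕ → Type} {n m : ℕ} (A : Alg σ) (t : Term σ n)
    (g : Fin n → Term σ m) (v : Fin m → A.carrier) :
    (Term.subst t g).eval A v = t.eval A (fun i => (g i).eval A v) := by
  induction t with
  | var i => rfl
  | app f ts ih =>
    show A.interp f _ = A.interp f _
    congr 1
    funext j
    exact ih j

/-- Renaming of variables. -/
def Term.rename {σ : ℕ → Type} {n m : ℕ} (t : Term σ n) (e : Fin n → Fin m) : Term σ m :=
  Term.subst t (fun i => .var (e i))

theorem Term.eval_rename {σ : ℕ → Type} {n m : ℕ} (A : Alg σ) (t : Term σ n)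
    (e : Fin n → Fin m) (v : Fin m → A.carrier) :
    (Term.rename t e).eval A v = t.eval A (fun i => v (e i)) :=
  Term.eval_subst A t _ v

theorem isPolN_proj {σ : ℕ → Type} (A : Alg σ) {m : ℕ} (i : Fin m) :
    IsPolN A m (fun v => v i) :=
  ⟨0, .var (Fin.castAdd 0 i), Fin.elim0, fun v => (Fin.append_left v _ i).symm⟩

theorem isPolN_const {σ : ℕ → Type} (A : Alg σ) {m : ℕ} (s : A.carrier) :
    IsPolN A m (fun _ => s) :=
  ⟨1, .var (Fin.natAdd m 0), fun _ => s, fun v =>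
    show s = Fin.append v (fun _ => s) (Fin.natAdd m 0) from
      (Fin.append_right v (fun _ => s) 0).symm⟩

/-- Merge the constant vectors of a family of polynomials. -/
theorem polN_merge {σ : ℕ → Type} (A : Alg σ) {m : ℕ} :
    ∀ {j : ℕ} (q : Fin j → (Fin m → A.carrier) → A.carrier),
    (∀ i, IsPolN A m (q i)) →
    ∃ (k : ℕ) (c : Fin k → A.carrier) (ts : Fin j → Term σ (m + k)),
      ∀ i v, q i v = (ts i).eval A (Fin.append v c) := by
  intro j
  induction j with
  | zero =>
    intro q _
    exact ⟨0, Fin.elim0, Fin.elim0, fun i => i.elim0⟩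
  | succ j ih =>
    intro q hq
    obtain ⟨k0, t0, c0, h0⟩ := hq 0
    obtain ⟨k1, c1, ts1, h1⟩ := ih (fun i => q i.succ) (fun i => hq i.succ)
    refine ⟨k0 + k1, Fin.append c0 c1,
      Fin.cons
        (Term.rename t0 (Fin.addCases (Fin.castAdd (k0 + k1))
          (fun b => Fin.natAdd m (Fin.castAdd k1 b))))
        (fun i => Term.rename (ts1 i) (Fin.addCases (Fin.castAdd (k0 + k1))
          (fun b => Fin.natAdd m (Fin.natAdd k0 b)))), ?_⟩
    intro i v
    refine Fin.cases ?_ ?_ i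
    · rw [Fin.cons_zero, Term.eval_rename, h0]
      congr 1
      funext x
      refine Fin.addCases ?_ ?_ x <;> intro y <;>
        simp [Fin.append_left, Fin.append_right]
    · intro i'
      rw [Fin.cons_succ, Term.eval_rename, h1]
      congr 1
      funext x
      refine Fin.addCases ?_ ?_ x <;> intro y <;>
        simp [Fin.append_left, Fin.append_right]

/-- Composition of a term with polynomial arguments is a polynomial. -/
theorem isPolN_comp_term {σ : ℕ → Type} (A : Alg σ) {j m : ℕ} (t : Term σ j)
    (args : Fin j → (Fin m → A.carrier) → A.carrier) (h : ∀ i, IsPolN A m (args i)) :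
    IsPolN A m (fun v => t.eval A (fun i => args i v)) := by
  obtain ⟨k, c, ts, hts⟩ := polN_merge A args h
  refine ⟨k, Term.subst t ts, c, fun v => ?_⟩
  show t.eval A (fun i => args i v) = _
  rw [Term.eval_subst]
  congr 1
  funext i
  exact hts i v

/-- Composition of a polynomial with polynomial arguments is a polynomial. -/
theorem isPolN_comp {σ : ℕ → Type} (A : Alg σ) {j m : ℕ}
    {P : (Fin j → A.carrier) → A.carrier} (hP : IsPolN A j P)
    {args : Fin j → (Fin m → A.carrier) → A.carrier} (h : ∀ i, IsPolN A m (args i)) :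
    IsPolN A m (fun v => P (fun i => args i v)) := by
  obtain ⟨k, t, c, hPt⟩ := hP
  have h' : ∀ i' : Fin (j + k), IsPolN A m
      (Fin.addCases (motive := fun _ => (Fin m → A.carrier) → A.carrier)
        args (fun i _ => c i) i') := by
    intro i'
    refine Fin.addCases ?_ ?_ i' <;> intro y
    · rw [Fin.addCases_left]; exact h y
    · rw [Fin.addCases_right]; exact isPolN_const A (c y)
  obtain ⟨k', t', c', h''⟩ := isPolN_comp_term A t _ h'
  refine ⟨k', t', c', fun v => ?_⟩
  show P (fun i => args i v) = _
  rw [hPt, ← h'']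
  congr 1
  funext i'
  refine Fin.addCases ?_ ?_ i' <;> intro y <;>
    simp [Fin.append_left, Fin.append_right]

theorem append_one {α : Type} (x : α) {k : ℕ} (c : Fin k → α) (i : Fin (k + 1)) :
    Fin.append (fun _ : Fin 1 => x) c (Fin.cast (Nat.add_comm k 1) i) =
      (Fin.cons x c : Fin (k + 1) → α) i := by
  refine Fin.cases ?_ ?_ i
  · simp [Fin.append, Fin.addCases]
  · intro j
    simp [Fin.append, Fin.addCases, Fin.cast]

/-- A unary polynomial as a 1-ary polynomial operation. -/
theorem isPol1_toN {σ : ℕ → Type} (A : Alg σ) {g : A.carrier → A.carrier}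
    (hg : IsPol1 A g) : IsPolN A 1 (fun v => g (v 0)) := by
  obtain ⟨k, t, c, ht⟩ := hg
  refine ⟨k, Term.rename t (Fin.cast (Nat.add_comm k 1)), c, fun v => ?_⟩
  show g (v 0) = _
  rw [ht, Term.eval_rename]
  congr 1
  funext i
  have hv : v = fun _ => v 0 := funext fun j => congrArg v (Fin.fin_one_eq_zero j)
  rw [hv]
  exact (append_one (v 0) c i).symm

/-- Term evaluation respects congruences. -/
theorem eval_cong {σ : ℕ → Type} (A : Alg σ) {θ : A.carrier → A.carrier → Prop}
    (hθ : IsCongA A θ) {n : ℕ} (t : Term σ n) (w w' : Fin n → A.carrier)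
    (h : ∀ i, θ (w i) (w' i)) : θ (t.eval A w) (t.eval A w') := by
  induction t with
  | var i => exact h i
  | app f ts ih => exact hθ.2 _ f _ _ (fun j => ih j)

/-- Polynomial operations respect congruences. -/
theorem polN_cong {σ : ℕ → Type} (A : Alg σ) {m : ℕ}
    {p : (Fin m → A.carrier) → A.carrier} (hp : IsPolN A m p)
    {θ : A.carrier → A.carrier → Prop} (hθ : IsCongA A θ)
    {u v : Fin m → A.carrier} (h : ∀ i, θ (u i) (v i)) : θ (p u) (p v) := by
  obtain ⟨k, t, c, ht⟩ := hp
  rw [ht u, ht v]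
  refine eval_cong A hθ t _ _ ?_
  intro i
  refine Fin.addCases ?_ ?_ i <;> intro y <;>
    simp only [Fin.append_left, Fin.append_right]
  · exact h y
  · exact hθ.1.refl _

end PolAux

/-- in a finite Mal'cev algebra, for a covering pair `α ≺ β`,
the relation `β'` is a congruence and equals `β`. -/
theorem betaPrime_is_congruence_and_eq {σ : ℕ → Type} (A : Alg σ) [Fintype A.carrier]
    (dT : Term σ 3)
    (hd : ∀ x y : A.carrier, dT.eval A ![x, x, y] = y ∧ dT.eval A ![y, x, x] = y)
    (α β : A.carrier → A.carrier → Prop) (hcov : IsCoverA A α β)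
    (a b : A.carrier) (hab : β a b ∧ ¬ α a b)
    (f : A.carrier → A.carrier) (hf : IsPol1 A f)
    (hmin : IsMinSetA A α β (Set.range f))
    (hfab : β (f a) (f b) ∧ ¬ α (f a) (f b)) :
    IsCongA A (betaPrime A α (f a) (f b)) ∧
      (∀ x y, betaPrime A α (f a) (f b) x y ↔ β x y) := by
  classical
  obtain ⟨hα, hβ, hαβ, _hβα, hmax⟩ := hcov
  set fa := f a with hfa
  set fb := f b with hfb
  set B := betaPrime A α fa fb with hB
  -- d as a 3-ary polynomial
  have hPd : IsPolN A 3 (fun w => dT.eval A w) := by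
    refine ⟨0, PolAux.Term.rename dT (Fin.castAdd 0), Fin.elim0, fun v => ?_⟩
    rw [PolAux.Term.eval_rename]
    congr 1
    funext i
    exact (Fin.append_left v _ i).symm
  -- α ⊆ B and (fa, fb) ∈ B
  have hαB : ∀ x y, α x y → B x y := fun x y h =>
    ⟨1, fun v => v 0, PolAux.isPolN_proj A 0, fun _ => x, fun _ => y,
      fun _ => Or.inl h, rfl, rfl⟩
  have hfaB : B fa fb :=
    ⟨1, fun v => v 0, PolAux.isPolN_proj A 0, fun _ => fa, fun _ => fb,
      fun _ => Or.inr ⟨rfl, rfl⟩, rfl, rfl⟩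
  have hrefl : ∀ x, B x x := fun x => hαB x x (hα.1.refl x)
  -- symmetry
  have hsymm : ∀ x y, B x y → B y x := by
    rintro x y ⟨m, p, hp, u, v, hc, rfl, rfl⟩
    have hargs : ∀ i : Fin 3,
        IsPolN A m (![(fun _ => p u), p, (fun _ => p v)] i) := by
      intro i
      fin_cases i
      · exact PolAux.isPolN_const A _
      · exact hp
      · exact PolAux.isPolN_const A _
    refine ⟨m, fun w => dT.eval A
        (fun i => ![(fun _ => p u), p, (fun _ => p v)] i w),
      PolAux.isPolN_comp A hPd hargs, u, v, hc, ?_, ?_⟩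
    · have : (fun i => ![(fun _ => p u), p, (fun _ => p v)] i u) = ![p u, p u, p v] := by
        funext i; fin_cases i <;> rfl
      show dT.eval A (fun i => ![(fun _ => p u), p, (fun _ => p v)] i u) = p v
      rw [this]
      exact (hd (p u) (p v)).1
    · have : (fun i => ![(fun _ => p u), p, (fun _ => p v)] i v) = ![p u, p v, p v] := by
        funext i; fin_cases i <;> rfl
      show dT.eval A (fun i => ![(fun _ => p u), p, (fun _ => p v)] i v) = p u
      rw [this]
      exact (hd (p v) (p u)).2
  -- transitivity
  have htrans : ∀ x y z, B x y → B y z → B x z := by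
    rintro x y z ⟨m, p, hp, u, v, hc, rfl, rfl⟩ ⟨m', q, hq, u', v', hc', hqu', rfl⟩
    set pl : (Fin (m + m') → A.carrier) → A.carrier :=
      fun w => p (fun i => w (Fin.castAdd m' i)) with hpl
    set qr : (Fin (m + m') → A.carrier) → A.carrier :=
      fun w => q (fun i => w (Fin.natAdd m i)) with hqr
    have hplP : IsPolN A (m + m') pl :=
      PolAux.isPolN_comp A hp (fun i => PolAux.isPolN_proj A (Fin.castAdd m' i))
    have hqrP : IsPolN A (m + m') qr :=
      PolAux.isPolN_comp A hq (fun i => PolAux.isPolN_proj A (Fin.natAdd m i))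
    have hargs : ∀ i : Fin 3, IsPolN A (m + m') (![pl, (fun _ => p v), qr] i) := by
      intro i
      fin_cases i
      · exact hplP
      · exact PolAux.isPolN_const A _
      · exact hqrP
    refine ⟨m + m', fun w => dT.eval A (fun i => ![pl, (fun _ => p v), qr] i w),
      PolAux.isPolN_comp A hPd hargs, Fin.append u u', Fin.append v v', ?_, ?_, ?_⟩
    · intro i
      refine Fin.addCases ?_ ?_ i <;> intro j
      · simpa [Fin.append_left] using hc j
      · simpa [Fin.append_right] using hc' j
    · have h1 : (fun i => ![pl, (fun _ => p v), qr] i (Fin.append u u')) =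
          ![p u, p v, p v] := by
        funext i
        fin_cases i
        · show p (fun i => Fin.append u u' (Fin.castAdd m' i)) = p u
          congr 1
          funext j
          exact Fin.append_left u u' j
        · rfl
        · show q (fun i => Fin.append u u' (Fin.natAdd m i)) = p v
          rw [← hqu']
          congr 1
          funext j
          exact Fin.append_right u u' j
      show dT.eval A (fun i => ![pl, (fun _ => p v), qr] i (Fin.append u u')) = p u
      rw [h1]
      exact (hd (p v) (p u)).2
    · have h2 : (fun i => ![pl, (fun _ => p v), qr] i (Fin.append v v')) =
          ![p v, p v, q v'] := by
        funext i
        fin_cases i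
        · show p (fun i => Fin.append v v' (Fin.castAdd m' i)) = p v
          congr 1
          funext j
          exact Fin.append_left v v' j
        · rfl
        · show q (fun i => Fin.append v v' (Fin.natAdd m i)) = q v'
          congr 1
          funext j
          exact Fin.append_right v v' j
      show dT.eval A (fun i => ![pl, (fun _ => p v), qr] i (Fin.append v v')) = q v'
      rw [h2]
      exact (hd (p v) (q v')).1
  -- closure under unary polynomials
  have hpol1 : ∀ g, IsPol1 A g → ∀ x y, B x y → B (g x) (g y) := by
    rintro g hg x y ⟨m, p, hp, u, v, hc, rfl, rfl⟩
    have : IsPolN A m (fun w => (fun w' : Fin 1 → A.carrier => g (w' 0))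
        (fun i => ![p] i w)) :=
      PolAux.isPolN_comp A (PolAux.isPol1_toN A hg)
        (fun i => by fin_cases i; exact hp)
    exact ⟨m, fun w => g (p w), this, u, v, hc, rfl, rfl⟩
  -- compatibility with the basic operations
  have hcompat : ∀ (k : ℕ) (fo : σ k) (u v : Fin k → A.carrier),
      (∀ j, B (u j) (v j)) → B (A.interp fo u) (A.interp fo v) := by
    intro k fo u v huv
    have key : ∀ l : ℕ, l ≤ k →
        B (A.interp fo u) (A.interp fo (fun i => if (i : ℕ) < l then v i else u i)) := by
      intro l
      induction l with
      | zero =>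
        intro _
        have h0 : (fun i : Fin k => if (i : ℕ) < 0 then v i else u i) = u := by
          funext i; simp
        rw [h0]
        exact hrefl _
      | succ l ih =>
        intro hl
        have hl' : l < k := hl
        set wl : Fin k → A.carrier := fun i => if (i : ℕ) < l then v i else u i with hwl
        refine htrans _ _ _ (ih (le_of_lt hl')) ?_
        have hg : IsPol1 A (fun x => A.interp fo (Function.update wl ⟨l, hl'⟩ x)) := by
          refine ⟨k, .app fo (fun i => if i = ⟨l, hl'⟩ then .var 0 else .var i.succ),
            wl, fun x => ?_⟩
        
          show A.interp fo _ = A.interp fo _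
          congr 1
          funext i
          by_cases h : i = ⟨l, hl'⟩
          · subst h
            simp [Term.eval]
          · simp [h, Term.eval, Function.update_apply]
        have h1 : A.interp fo wl =
            (fun x => A.interp fo (Function.update wl ⟨l, hl'⟩ x)) (u ⟨l, hl'⟩) := by
          congr 1
          funext i
          rw [Function.update_apply]
          split_ifs with h
          · rw [h, hwl]; simp
          · rfl
        have h2 : A.interp fo (fun i : Fin k => if (i : ℕ) < l + 1 then v i else u i) =
            (fun x => A.interp fo (Function.update wl ⟨l, hl'⟩ x)) (v ⟨l, hl'⟩) := by
          congr 1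
          funext i
          rw [Function.update_apply]
          by_cases h : i = ⟨l, hl'⟩
          · rw [if_pos h, h]; simp
          · rw [if_neg h]
            have hiff : ((i : ℕ) < l + 1) ↔ ((i : ℕ) < l) := by
              constructor
              · intro hh
                rcases Nat.lt_succ_iff_lt_or_eq.mp hh with h' | h'
                · exact h'
                · exact absurd (Fin.ext h') h
              · exact fun hh => Nat.lt_succ_of_lt hh
            simp only [hwl, hiff]
        rw [h2, h1]
        exact hpol1 _ hg _ _ (huv ⟨l, hl'⟩)
    have := key k le_rfl
    have hv : (fun i : Fin k => if (i : ℕ) < k then v i else u i) = v := by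
      funext i; simp [i.isLt]
    rwa [hv] at this
  have hcong : IsCongA A B :=
    ⟨⟨hrefl, fun {x y} h => hsymm x y h, fun {x y z} h h' => htrans x y z h h'⟩, hcompat⟩
  -- B ⊆ β
  have hBβ : ∀ x y, B x y → β x y := by
    rintro x y ⟨m, p, hp, u, v, hc, rfl, rfl⟩
    refine PolAux.polN_cong A hp hβ (fun i => ?_)
    rcases hc i with h | ⟨h1, h2⟩
    · exact hαβ _ _ h
    · rw [h1, h2]; exact hfab.1
  -- B = β by the covering property
  have hβB : ∀ x y, β x y → B x y := by
    rcases hmax B hcong (fun x y h => hαB x y h) (fun x y h => hBβ x y h) with h | h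
    · exact absurd (h fa fb hfaB) hfab.2
    · exact h
  exact ⟨hcong, fun x y => ⟨hBβ x y, hβB x y⟩⟩
end

section
/- Let R be a subdirect product of finite regular SMB algebras A₁, ..., Aₙ, let W ⊆ {1,...,n}, and for each i ∈ W let (αᵢ, βᵢ) be a covering pair of congruences of Aᵢ with βᵢ below the Rees congruence θᵢ. Suppose that for all i, j ∈ W the pairs (αᵢ, βᵢ) and (αⱼ, βⱼ) cannot be separated with respect to R. Then R is ᾱβ̄-aligned: for every tuple a ∈ R and all i, j ∈ W, a(i) is an (αᵢ,βᵢ)-split element if and only if a(j) is an (αⱼ,βⱼ)-split element. -/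
/-- if all the covering pairs `(αᵢ, βᵢ)`, `i ∈ W`, are pairwise
non-separable with respect to the subdirect product `R`, then `R` is `ᾱβ̄`-aligned. -/
theorem nonseparable_implies_aligned {n : ℕ} {A : Fin n → Type} [∀ i, Fintype (A i)]
    (S : ∀ i, RegSMB (A i))
    (M : ∀ i, Set (A i)) (hM : ∀ i, SMB.IsMinClass (S i).toSMB (M i))
    (R : Set (∀ i, A i)) (hR : SubdirectSMB (fun i => (S i).toSMB) R)
    (W : Set (Fin n)) (α β : ∀ i, A i → A i → Prop)
    (hcov : ∀ i ∈ W, SMB.IsCover (S i).toSMB (α i) (β i))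
    (hθ : ∀ i ∈ W, CongLE (β i) (reesCong (M i)))
    (hnosep : ∀ i ∈ W, ∀ j ∈ W,
      ¬ SepWrt (fun k => (S k).toSMB) R i (α i) (β i) j (α j) (β j)) :
    ∀ a ∈ R, ∀ i ∈ W, ∀ j ∈ W,
      (SMB.IsSplit (S i).toSMB (α i) (β i) (a i) ↔
        SMB.IsSplit (S j).toSMB (α j) (β j) (a j)) := by
  intro a ha i hi j hj
  have key : ∀ i ∈ W, ∀ j ∈ W,
      SMB.IsSplit (S i).toSMB (α i) (β i) (a i) →
      SMB.IsSplit (S j).toSMB (α j) (β j) (a j) := by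
    intro i hi j hj hsplit
    by_contra hns
    apply hnosep i hi j hj
    refine ⟨PTerm.meet (PTerm.const ⟨a, ha⟩) PTerm.var, ?_, ?_⟩
    · intro hmaps
      obtain ⟨b, c, hbc, hnab⟩ := hsplit
      exact hnab (hmaps b c hbc)
    · intro b c hbc
      by_contra hnab
      exact hns ⟨b, c, hbc, hnab⟩
  exact ⟨key i hi j hj, key j hj i hi⟩
end

section
/- Let R be a subdirect product of finite regular SMB algebras A₁, ..., Aₙ, let (i, α, β) be such that α ≺ β ≤ θᵢ (the Rees congruence of Aᵢ), and let f ∈ Pol₁(R) be an (α,β)-collapsing polynomial. If j is an index such that for every covering pair γ ≺ δ ≤ θⱼ in Con(Aⱼ), (α,β) can be separated from (γ,δ) with respect to R, then |fⱼ(Aⱼ)| = 1 and the unique element of fⱼ(Aⱼ) lies in min(Aⱼ). -/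
/-- `p` (a unary polynomial of `R` with constants from `R`) is an `(α,β)`-collapsing
polynomial for the triple `(i, α, β)`. -/
def IsCollapsing {n : ℕ} {A : Fin n → Type} (S : ∀ i, RegSMB (A i))
    (M : ∀ i, Set (A i)) (R : Set (∀ i, A i))
    (i : Fin n) (α β : A i → A i → Prop)
    (p : PTerm {r : ∀ i, A i // r ∈ R}) : Prop :=
  (∀ (k : Fin n) (x : A k),
      coordEval (fun l => (S l).toSMB) R p k (coordEval (fun l => (S l).toSMB) R p k x) =
        coordEval (fun l => (S l).toSMB) R p k x) ∧
  (∀ (k : Fin n) (x : A k), coordEval (fun l => (S l).toSMB) R p k x ∈ M k) ∧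
  (∀ (k : Fin n) (γ δ : A k → A k → Prop),
      SMB.IsCover (S k).toSMB γ δ → CongLE δ (reesCong (M k)) →
      SepWrt (fun l => (S l).toSMB) R i α β k γ δ →
      MapsC (coordEval (fun l => (S l).toSMB) R p k) δ γ) ∧
  (∀ (k : Fin n) (γ δ : A k → A k → Prop),
      SMB.IsCover (S k).toSMB γ δ → CongLE δ (reesCong (M k)) →
      ¬ SepWrt (fun l => (S l).toSMB) R i α β k γ δ →
      SMB.IsMinSet (S k).toSMB γ δ (Set.range (coordEval (fun l => (S l).toSMB) R p k)))

/-- Size of a binary relation on a finite type. -/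
noncomputable def relMsr {A : Type} (ρ : A → A → Prop) : ℕ := Set.ncard {q : A × A | ρ q.1 q.2}

lemma relMsr_mono {A : Type} [Fintype A] {ρ ρ' : A → A → Prop} (h : CongLE ρ ρ') :
    relMsr ρ ≤ relMsr ρ' :=
  Set.ncard_le_ncard (fun q hq => h q.1 q.2 hq) (Set.toFinite _)

lemma relMsr_strict {A : Type} [Fintype A] {ρ ρ' : A → A → Prop}
    (h : CongLE ρ ρ') (h' : ¬ CongLE ρ' ρ) : relMsr ρ < relMsr ρ' := by
  apply Set.ncard_lt_ncard _ (Set.toFinite _)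
  rw [Set.ssubset_def]
  exact ⟨fun q hq => h q.1 q.2 hq, fun hc => h' (fun a b hab => hc (a := (a, b)) hab)⟩

lemma eq_isCong {A : Type} (S : SMB A) : S.IsCong (· = ·) := by
  refine ⟨⟨fun _ => rfl, fun h => h.symm, fun h h' => h.trans h'⟩, ?_, ?_⟩
  · rintro a b a' b' rfl rfl; rfl
  · rintro a b c a' b' c' rfl rfl rfl; rfl

/-- In a finite algebra, below any congruence `δ` that is not trivial there is a
congruence `γ` maximal among those strictly below `δ`. -/
lemma exists_max_below {A : Type} [Fintype A] (S : SMB A) (δ : A → A → Prop)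
    (hδ : S.IsCong δ) (hne : ¬ CongLE δ (· = ·)) :
    ∃ γ, S.IsCong γ ∧ CongLE γ δ ∧ ¬ CongLE δ γ ∧
      ∀ γ', S.IsCong γ' → CongLE γ' δ → ¬ CongLE δ γ' → CongLE γ γ' → CongLE γ' γ := by
  have aux : ∀ k : ℕ, ∀ γ : A → A → Prop, S.IsCong γ → CongLE γ δ → ¬ CongLE δ γ →
      relMsr δ - relMsr γ ≤ k →
      ∃ γm, S.IsCong γm ∧ CongLE γm δ ∧ ¬ CongLE δ γm ∧
        ∀ γ', S.IsCong γ' → CongLE γ' δ → ¬ CongLE δ γ' → CongLE γm γ' → CongLE γ' γm := by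
    intro k
    induction k with
    | zero =>
      intro γ hγ hle hnle hk
      have := relMsr_strict hle hnle
      omega
    | succ k ih =>
      intro γ hγ hle hnle hk
      by_cases hmax : ∀ γ', S.IsCong γ' → CongLE γ' δ → ¬ CongLE δ γ' → CongLE γ γ' → CongLE γ' γ
      · exact ⟨γ, hγ, hle, hnle, hmax⟩
      · push_neg at hmax
        obtain ⟨γ', hγ', hle', hnle', hγγ', hnsub⟩ := hmax
        have h1 : relMsr γ < relMsr γ' := relMsr_strict hγγ' hnsub
        have h2 : relMsr γ' < relMsr δ := relMsr_strict hle' hnle'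
        exact ih γ' hγ' hle' hnle' (by omega)
  exact aux (relMsr δ) (· = ·) (eq_isCong S) (fun a b h => h ▸ hδ.1.1 a) hne (by omega)

/-- The Rees congruence of the minimal class is a congruence. -/
lemma rees_isCong {A : Type} (S : RegSMB A) (M : Set A) (hM : S.IsMinClass M) :
    S.IsCong (reesCong M) := by
  obtain ⟨m, hMeq, hmin⟩ := hM
  have memM : ∀ a, a ∈ M ↔ S.sim a m := fun a => by rw [hMeq]; rfl
  have meet_mem : ∀ a b, a ∈ M ∨ b ∈ M → S.meet a b ∈ M := by
    intro a b hab
    rcases hab with ha | hb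
    · rw [memM] at ha ⊢
      exact S.sim_equiv.trans (S.sim_meet ha (S.sim_equiv.refl b)) (hmin b)
    · rw [memM] at hb ⊢
      refine S.sim_equiv.trans (S.sim_meet (S.sim_equiv.refl a) hb) ?_
      exact S.sim_equiv.trans (S.meet_comm_sim a m) (hmin a)
  have d_mem : ∀ a b c, a ∈ M ∨ b ∈ M ∨ c ∈ M → S.d a b c ∈ M := by
    intro a b c h
    have h2 : S.meet (S.meet a b) c ∈ M := by
      rcases h with h | h | h
      · exact meet_mem _ _ (Or.inl (meet_mem _ _ (Or.inl h)))
      · exact meet_mem _ _ (Or.inl (meet_mem _ _ (Or.inr h)))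
      · exact meet_mem _ _ (Or.inr h)
    rw [memM] at h2 ⊢
    exact S.sim_equiv.trans (S.reg1 a b c) h2
  refine ⟨⟨fun a => Or.inl rfl, ?_, ?_⟩, ?_, ?_⟩
  · rintro a b (rfl | ⟨ha, hb⟩)
    · exact Or.inl rfl
    · exact Or.inr ⟨hb, ha⟩
  · rintro a b c (rfl | ⟨ha, hb⟩) h2
    · exact h2
    · rcases h2 with rfl | ⟨_, hc⟩
      · exact Or.inr ⟨ha, hb⟩
      · exact Or.inr ⟨ha, hc⟩
  · rintro a b a' b' (rfl | ⟨ha, ha'⟩) (rfl | ⟨hb, hb'⟩)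
    · exact Or.inl rfl
    · exact Or.inr ⟨meet_mem _ _ (Or.inr hb), meet_mem _ _ (Or.inr hb')⟩
    · exact Or.inr ⟨meet_mem _ _ (Or.inl ha), meet_mem _ _ (Or.inl ha')⟩
    · exact Or.inr ⟨meet_mem _ _ (Or.inl ha), meet_mem _ _ (Or.inl ha')⟩
  · rintro a b c a' b' c' (rfl | ⟨ha, ha'⟩) hb hc
    · rcases hb with rfl | ⟨hb, hb'⟩
      · rcases hc with rfl | ⟨hc, hc'⟩
        · exact Or.inl rfl
        · exact Or.inr ⟨d_mem _ _ _ (Or.inr (Or.inr hc)), d_mem _ _ _ (Or.inr (Or.inr hc'))⟩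
      · exact Or.inr ⟨d_mem _ _ _ (Or.inr (Or.inl hb)), d_mem _ _ _ (Or.inr (Or.inl hb'))⟩
    · exact Or.inr ⟨d_mem _ _ _ (Or.inl ha), d_mem _ _ _ (Or.inl ha')⟩

/-- if `f` is an `(α,β)`-collapsing polynomial of the subdirect product
`R` of finite regular SMB algebras and `(α,β)` can be separated from every covering
pair `γ ≺ δ ≤ θⱼ` of `Aⱼ`, then `fⱼ(Aⱼ)` is a singleton contained in `min Aⱼ`. -/
theorem collapsing_to_singleton {n : ℕ} {A : Fin n → Type} [∀ i, Fintype (A i)]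
    (S : ∀ i, RegSMB (A i))
    (M : ∀ i, Set (A i)) (hM : ∀ i, SMB.IsMinClass (S i).toSMB (M i))
    (R : Set (∀ i, A i)) (hR : SubdirectSMB (fun i => (S i).toSMB) R)
    (i : Fin n) (α β : A i → A i → Prop)
    (hcov : SMB.IsCover (S i).toSMB α β) (hβθ : CongLE β (reesCong (M i)))
    (p : PTerm {r : ∀ i, A i // r ∈ R}) (hp : IsCollapsing S M R i α β p)
    (j : Fin n)
    (hj : ∀ γ δ : A j → A j → Prop,
      SMB.IsCover (S j).toSMB γ δ → CongLE δ (reesCong (M j)) →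
      SepWrt (fun l => (S l).toSMB) R i α β j γ δ) :
    ∃ m ∈ M j, ∀ x : A j, coordEval (fun l => (S l).toSMB) R p j x = m := by
  classical
  obtain ⟨hidem, himg, hsep, -⟩ := hp
  set f : A j → A j := coordEval (fun l => (S l).toSMB) R p j with hf
  -- key collapsing argument by induction on the size of the congruence
  have key : ∀ N : ℕ, ∀ δ : A j → A j → Prop, (S j).toSMB.IsCong δ →
      CongLE δ (reesCong (M j)) → relMsr δ ≤ N →
      ∀ a b, δ (f a) (f b) → f a = f b := by
    intro N
    induction N with
    | zero =>
      intro δ hδ _ hN a b hab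
      have : {q : A j × A j | δ q.1 q.2} = ∅ :=
        (Set.ncard_eq_zero (Set.toFinite _)).mp (Nat.le_zero.mp hN)
      exact absurd (by exact hab : ((f a, f b) : A j × A j) ∈ {q : A j × A j | δ q.1 q.2})
        (this ▸ (Set.notMem_empty _))
    | succ N ih =>
      intro δ hδ hδrees hN a b hab
      by_cases htriv : CongLE δ (· = ·)
      · exact htriv _ _ hab
      · obtain ⟨γ, hγ, hγδ, hδγ, hmax⟩ := exists_max_below (S j).toSMB δ hδ htriv
        have hcover : (S j).toSMB.IsCover γ δ := by
          refine ⟨hγ, hδ, hγδ, hδγ, ?_⟩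
          intro γ' hγ' hγγ' hγ'δ
          by_cases h : CongLE δ γ'
          · exact Or.inr h
          · exact Or.inl (hmax γ' hγ' hγ'δ h hγγ')
        have hmaps : MapsC f δ γ :=
          hsep j γ δ hcover hδrees (hj γ δ hcover hδrees)
        have h1 : γ (f (f a)) (f (f b)) := hmaps _ _ hab
        rw [hf] at h1
        rw [hidem j a, hidem j b] at h1
        rw [← hf] at h1
        have hγrees : CongLE γ (reesCong (M j)) := fun a b h => hδrees a b (hγδ a b h)
        have hmsr : relMsr γ < relMsr δ := relMsr_strict hγδ hδγ
        exact ih γ hγ hγrees (by omega) a b h1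
  obtain ⟨m0, -, -⟩ := hM j
  refine ⟨f m0, himg j m0, fun x => ?_⟩
  exact key (relMsr (reesCong (M j))) (reesCong (M j)) (rees_isCong (S j) (M j) (hM j))
    (fun _ _ h => h) le_rfl x m0 (Or.inr ⟨himg j x, himg j m0⟩)
end
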